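/- arXiv:1506.06360 — 3 statements merged into one kernel-verified Lean document; each statement's English description precedes it below -/
import Mathlib

section
/- For every real w > 0, the Fourier sine transform of 1/(e^{2πt}-1) satisfies ∫₀^∞ sin(wt)/(e^{2πt}-1) dt = (1/2)(1/(e^w - 1) + 1/2 - 1/w). -/
set_option maxHeartbeats 1000000

open MeasureTheory Set Real Filter Asymptotics Topology
open scoped FourierTransform

lemma integrableOn_cexp_Ioi' {c : ℂ} (hc : c.re < 0) :
    IntegrableOn (fun v : ℝ => Complex.exp (c * v)) (Ioi (0:ℝ)) := by
  have h := exp_neg_integrableOn_Ioi 0 (b := -c.re) (by linarith)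
  refine Integrable.mono' h ?_ ?_
  · exact (Complex.continuous_exp.comp (by continuity)).aestronglyMeasurable
  · filter_upwards with v
    rw [Complex.norm_exp]
    simp [Complex.mul_re]

lemma integral_cexp_Ioi {c : ℂ} (hc : c.re < 0) :
    ∫ v in Ioi (0:ℝ), Complex.exp (c * v) = -c⁻¹ := by
  have hc0 : c ≠ 0 := fun h => by simp [h] at hc
  have hderiv : ∀ x ∈ Ioi (0:ℝ), HasDerivAt (fun v : ℝ => Complex.exp (c * v) / c)
      (Complex.exp (c * x)) x := by
    intro x _
    have h1 : HasDerivAt (fun z : ℂ => Complex.exp (c * z) / c) (Complex.exp (c * x)) (x : ℂ) := by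
      have := (((Complex.hasDerivAt_exp (c * x)).comp (x:ℂ)
        ((hasDerivAt_id (x:ℂ)).const_mul c))).div_const c
      refine this.congr_deriv ?_
      rw [mul_one, mul_div_cancel_right₀ _ hc0]
    exact h1.comp_ofReal
  have htend : Tendsto (fun v : ℝ => Complex.exp (c * v) / c) atTop (𝓝 0) := by
    rw [tendsto_zero_iff_norm_tendsto_zero]
    have heq : (fun v : ℝ => ‖Complex.exp (c * v) / c‖) = fun v => Real.exp (c.re * v) / ‖c‖ := by
      ext v
      rw [norm_div, Complex.norm_exp]
      simp [Complex.mul_re]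
    rw [heq]
    have h2 : Tendsto (fun v : ℝ => c.re * v) atTop atBot := by
      exact tendsto_id.const_mul_atTop_of_neg hc
    simpa using (Real.tendsto_exp_atBot.comp h2).div_const ‖c‖
  have := integral_Ioi_of_hasDerivAt_of_tendsto
    (f := fun v : ℝ => Complex.exp (c * v) / c) (f' := fun v : ℝ => Complex.exp (c * v))
    (a := 0) (m := 0) ?_ hderiv (integrableOn_cexp_Ioi' hc) htend
  · rw [this]; simp [one_div]
  · exact ((Complex.continuous_exp.comp (by continuity)).div_const c).continuousWithinAt

lemma integral_exp_mul_sin {b : ℝ} (c : ℝ) (hb : 0 < b) :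
    ∫ t in Ioi (0:ℝ), Real.exp (-b*t) * Real.sin (c*t) = c/(b^2+c^2) := by
  set z : ℂ := -b + c*Complex.I with hzdef
  have hz : z.re < 0 := by simp [hzdef]; linarith
  have him : ∀ t:ℝ, (Complex.exp (z*t)).im = Real.exp (-b*t) * Real.sin (c*t) := by
    intro t
    rw [Complex.exp_im]
    congr 1
    · congr 1; simp [hzdef, Complex.mul_re]
    · congr 1; simp [hzdef, Complex.mul_im]
  have h1 : ∫ t in Ioi (0:ℝ), Real.exp (-b*t) * Real.sin (c*t)
      = (∫ t in Ioi (0:ℝ), Complex.exp (z*t)).im := by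
    have h2 := integral_im (𝕜 := ℂ) (integrableOn_cexp_Ioi' hz)
    simp only [RCLike.im_to_complex, him] at h2
    exact h2
  rw [h1, integral_cexp_Ioi hz]
  simp [Complex.inv_im, Complex.normSq_apply, hzdef, neg_div]
  ring_nf

lemma integrableOn_neg_Iic {f : ℝ → ℂ} (hf : IntegrableOn f (Ioi (0:ℝ))) :
    IntegrableOn (fun x => f (-x)) (Iic (0:ℝ)) := by
  have A : MeasurableEmbedding (fun x : ℝ => -x) :=
    (Homeomorph.neg ℝ).isClosedEmbedding.measurableEmbedding
  have h0 : IntegrableOn f (Ici (0:ℝ)) := by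
    rwa [integrableOn_Ici_iff_integrableOn_Ioi]
  have hmap : (volume : Measure ℝ).restrict (Iic (0:ℝ))
      = Measure.map (fun x : ℝ => -x) ((volume : Measure ℝ).restrict (Ici (0:ℝ))) := by
    have := Measure.restrict_map (μ := (volume : Measure ℝ)) A.measurable
      (measurableSet_Iic : MeasurableSet (Iic (0:ℝ)))
    rw [Measure.map_neg_eq_self (volume : Measure ℝ)] at this
    rw [this]
    congr 1
    ext x
    simp
  rw [IntegrableOn, hmap, A.integrable_map_iff]
  have hcomp : ((fun x => f (-x)) ∘ fun x : ℝ => -x) = f := by ext x; simp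
  rwa [hcomp]

lemma fourier_exp_abs {w : ℝ} (hw : 0 < w) (ξ : ℝ) :
    𝓕 (fun x : ℝ => (Real.exp (-(w * |x|)) : ℂ)) ξ
      = ((2*w/(w^2 + 4*π^2*ξ^2) : ℝ) : ℂ) := by
  have hw0 : (w:ℂ) ≠ 0 := by exact_mod_cast hw.ne'
  set a : ℂ := 2*(π:ℂ)*(ξ:ℂ) * Complex.I with ha
  have hre : ∀ s : ℂ, s = -w + a ∨ s = -w - a → s.re < 0 := by
    rintro s (rfl | rfl) <;> simp [ha] <;> linarith
  rw [Real.fourier_real_eq_integral_exp_smul]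
  have hsplit : ∀ v : ℝ, Complex.exp (↑(-2 * π * v * ξ) * Complex.I) •
      (Real.exp (-(w * |v|)) : ℂ) = Complex.exp (-a * v + (-(w * |v|) : ℝ)) := by
    intro v
    rw [smul_eq_mul, Complex.exp_add, ← Complex.ofReal_exp]
    congr 2
    push_cast [ha]
    ring
  simp_rw [hsplit]
  have hIoi : ∫ v in Ioi (0:ℝ), Complex.exp (-a * v + (-(w * |v|) : ℝ))
      = -(-w - a)⁻¹ := by
    rw [← integral_cexp_Ioi (hre _ (Or.inr rfl))]
    refine setIntegral_congr_fun measurableSet_Ioi (fun v hv => ?_)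
    rw [abs_of_pos hv]
    congr 1
    push_cast
    ring
  have hIic : ∫ v in Iic (0:ℝ), Complex.exp (-a * v + (-(w * |v|) : ℝ))
      = -(-w + a)⁻¹ := by
    have := integral_comp_neg_Iic (0:ℝ) (fun v : ℝ => Complex.exp ((-w + a) * v))
    rw [neg_zero] at this
    rw [← integral_cexp_Ioi (hre _ (Or.inl rfl)), ← this]
    refine setIntegral_congr_fun measurableSet_Iic (fun v hv => ?_)
    rw [abs_of_nonpos hv]
    push_cast
    congr 1
    ring
  have hi1 : IntegrableOn (fun v : ℝ => Complex.exp (-a * v + (-(w * |v|) : ℝ))) (Ioi (0:ℝ)) := by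
    refine ((integrableOn_cexp_Ioi' (hre _ (Or.inr rfl))).congr_fun (fun v hv => ?_)
      measurableSet_Ioi)
    rw [abs_of_pos hv]; congr 1; push_cast; ring
  have hi2 : IntegrableOn (fun v : ℝ => Complex.exp (-a * v + (-(w * |v|) : ℝ))) (Iic (0:ℝ)) := by
    have h2 : IntegrableOn (fun v : ℝ => Complex.exp ((-w + a) * (-v:ℝ))) (Iic (0:ℝ)) :=
      integrableOn_neg_Iic (integrableOn_cexp_Ioi' (hre _ (Or.inl rfl)))
    refine h2.congr_fun (fun v hv => ?_) measurableSet_Iic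
    rw [abs_of_nonpos hv]; push_cast; congr 1; ring
  rw [← intervalIntegral.integral_Iic_add_Ioi hi2 hi1, hIic, hIoi]
  have h4 : ((-w:ℂ) + a) ≠ 0 := by
    intro h; have := hre _ (Or.inl rfl); rw [h] at this; simp at this
  have h5 : ((-w:ℂ) - a) ≠ 0 := by
    intro h; have := hre _ (Or.inr rfl); rw [h] at this; simp at this
  have ha2 : a^2 = -((4:ℂ)*(π:ℂ)^2*(ξ:ℂ)^2) := by
    rw [ha]; push_cast; rw [mul_pow, Complex.I_sq]; ring
  have hf : ((w:ℂ)^2 + 4*(π:ℂ)^2*(ξ:ℂ)^2) = ((-w:ℂ) + a) * ((-w:ℂ) - a) := by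
    linear_combination ha2
  have hπ : ((w:ℂ)^2 + 4*(π:ℂ)^2*(ξ:ℂ)^2) ≠ 0 := hf ▸ mul_ne_zero h4 h5
  push_cast
  rw [eq_div_iff hπ, hf]
  field_simp
  ring

lemma summable_u {w : ℝ} (hw : 0 < w) :
    Summable (fun n : ℕ => 2*w/(w^2+4*π^2*((n:ℝ)+1)^2)) := by
  have base : Summable fun n : ℕ => (1:ℝ)/(((n:ℝ)+1)^2) := by
    have h1 : Summable fun n : ℕ => (1:ℝ)/((n:ℝ)^2) := by
      exact_mod_cast Real.summable_one_div_nat_pow.mpr (le_refl 2)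
    have := (summable_nat_add_iff (f := fun n : ℕ => (1:ℝ)/((n:ℝ)^2)) 1).mpr h1
    simpa using this
  refine Summable.of_nonneg_of_le (fun n => by positivity) (fun n => ?_)
    (base.mul_left ((2*w)/(4*π^2)))
  have h2 : (2*w)/(4*π^2) * ((1:ℝ)/(((n:ℝ)+1)^2)) = 2*w/(4*π^2*((n:ℝ)+1)^2) := by
    field_simp
  rw [h2]
  apply div_le_div_of_nonneg_left (by positivity) (by positivity)
  nlinarith [sq_nonneg ((n:ℝ)+1), sq_nonneg w]

lemma summable_uZ {w : ℝ} (hw : 0 < w) :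
    Summable (fun n : ℤ => 2*w/(w^2+4*π^2*((n:ℝ))^2)) := by
  apply Summable.of_nat_of_neg_add_one
  · rw [← summable_nat_add_iff 1]
    refine (summable_u hw).congr fun n => ?_
    push_cast; ring_nf
  · refine (summable_u hw).congr fun n => ?_
    push_cast; ring_nf

lemma poisson_step {w : ℝ} (hw : 0 < w) :
    ∑' n : ℤ, Real.exp (-(w * |(n:ℝ)|)) = ∑' n : ℤ, 2*w/(w^2+4*π^2*((n:ℝ))^2) := by
  set f : ℝ → ℂ := fun x => (Real.exp (-(w * |x|)) : ℂ) with hf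
  have hc : Continuous f := by
    apply Complex.continuous_ofReal.comp
    exact Real.continuous_exp.comp (continuous_const.mul continuous_abs).neg
  have hTop : (fun x : ℝ => Real.exp (-(w * |x|))) =O[atTop] fun x => |x| ^ (-(2:ℝ)) := by
    refine ((isLittleO_exp_neg_mul_rpow_atTop hw (-(2:ℝ))).isBigO).congr' ?_ ?_
    · filter_upwards [eventually_gt_atTop (0:ℝ)] with x hx
      rw [abs_of_pos hx]; ring_nf
    · filter_upwards [eventually_gt_atTop (0:ℝ)] with x hx
      rw [abs_of_pos hx]
  have hBot : (fun x : ℝ => Real.exp (-(w * |x|))) =O[atBot] fun x => |x| ^ (-(2:ℝ)) := by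
    have h2 := hTop.comp_tendsto tendsto_neg_atBot_atTop
    simp only [Function.comp_def, abs_neg] at h2
    exact h2
  have hbig : f =O[cocompact ℝ] fun x => |x| ^ (-(2:ℝ)) := by
    rw [← isBigO_norm_left]
    have hnorm : (fun x : ℝ => ‖f x‖) = fun x : ℝ => Real.exp (-(w * |x|)) := by
      ext x
      rw [hf]
      rw [Complex.norm_real, Real.norm_eq_abs, abs_of_pos (Real.exp_pos _)]
    rw [hnorm, cocompact_eq_atBot_atTop, isBigO_sup]
    exact ⟨hBot, hTop⟩
  have hFeq : ∀ ξ : ℝ, 𝓕 f ξ = ((2*w/(w^2 + 4*π^2*ξ^2) : ℝ) : ℂ) := fourier_exp_abs hw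
  have hsum : Summable fun n : ℤ => 𝓕 f n := by
    simp_rw [hFeq]
    exact (Complex.summable_ofReal).mpr (summable_uZ hw)
  have key := Real.tsum_eq_tsum_fourier_of_rpow_decay_of_summable hc one_lt_two hbig hsum 0
  simp_rw [zero_add, hFeq] at key
  have hfour : ∀ n : ℤ, (fourier n ((0:ℝ) : UnitAddCircle) : ℂ) = 1 := by
    intro n
    rw [fourier_coe_apply]
    simp
  simp_rw [hfour, mul_one] at key
  rw [hf] at key
  rw [← Complex.ofReal_inj, Complex.ofReal_tsum, Complex.ofReal_tsum]
  exact key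

lemma base_summable : Summable fun n : ℕ => (1:ℝ)/(((n:ℝ)+1)^2) := by
  have h1 : Summable fun n : ℕ => (1:ℝ)/((n:ℝ)^2) := by
    exact_mod_cast Real.summable_one_div_nat_pow.mpr (le_refl 2)
  have := (summable_nat_add_iff (f := fun n : ℕ => (1:ℝ)/((n:ℝ)^2)) 1).mpr h1
  simpa using this

lemma integral_eq_sum {w : ℝ} (hw : 0 < w) :
    ∫ t in Ioi (0:ℝ), Real.sin (w * t) / (Real.exp (2 * π * t) - 1)
      = ∑' n : ℕ, w/((2*π*((n:ℝ)+1))^2+w^2) := by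
  set F : ℕ → ℝ → ℝ := fun n t => Real.sin (w*t) * Real.exp (-(2*π*((n:ℝ)+1))*t) with hF
  have hb : ∀ n : ℕ, (0:ℝ) < 2*π*((n:ℝ)+1) := fun n => by positivity
  have hFmeas : ∀ n, AEStronglyMeasurable (F n) (volume.restrict (Ioi (0:ℝ))) := fun n =>
    ((Real.continuous_sin.comp (continuous_const.mul continuous_id)).mul
      (Real.continuous_exp.comp (continuous_const.mul continuous_id))).aestronglyMeasurable
  have hFint : ∀ n, IntegrableOn (F n) (Ioi (0:ℝ)) := by
    intro n
    refine Integrable.mono' (exp_neg_integrableOn_Ioi 0 (hb n)) (hFmeas n) ?_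
    filter_upwards with t
    rw [hF]
    simp only [Real.norm_eq_abs, abs_mul, abs_exp]
    calc |Real.sin (w*t)| * Real.exp (-(2*π*((n:ℝ)+1))*t)
        ≤ 1 * Real.exp (-(2*π*((n:ℝ)+1))*t) := by
          apply mul_le_mul_of_nonneg_right (Real.abs_sin_le_one _) (Real.exp_pos _).le
      _ = Real.exp (-(2*π*((n:ℝ)+1))*t) := one_mul _
  -- integral of the majorant
  have hmajor : ∀ n : ℕ, IntegrableOn (fun t : ℝ => w * (t * Real.exp (-(2*π*((n:ℝ)+1))*t)))
      (Ioi (0:ℝ)) := by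
    intro n
    have h : IntegrableOn (fun x : ℝ => w * (x ^ (1:ℝ) * Real.exp (-(2*π*((n:ℝ)+1)) * x ^ (1:ℝ))))
        (Ioi (0:ℝ)) := (integrableOn_rpow_mul_exp_neg_mul_rpow (p := 1) (s := 1) (by norm_num)
      (by norm_num) (hb n)).const_mul w
    refine h.congr_fun (fun t ht => ?_) measurableSet_Ioi
    simp only [Real.rpow_one]
  have hmajorval : ∀ n : ℕ, ∫ t in Ioi (0:ℝ), w * (t * Real.exp (-(2*π*((n:ℝ)+1))*t))
      = w * (1/(2*π*((n:ℝ)+1)))^2 := by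
    intro n
    rw [integral_const_mul]
    congr 1
    have h := integral_rpow_mul_exp_neg_mul_Ioi (a := 2) (r := 2*π*((n:ℝ)+1)) (by norm_num) (hb n)
    rw [Real.Gamma_two, mul_one] at h
    have h2 : ((1:ℝ)/(2*π*((n:ℝ)+1)))^(2:ℝ) = ((1:ℝ)/(2*π*((n:ℝ)+1)))^(2:ℕ) := by
      rw [← Real.rpow_natCast]; norm_num
    rw [h2] at h
    rw [← h]
    refine setIntegral_congr_fun measurableSet_Ioi (fun t ht => ?_)
    rw [show ((2:ℝ)-1) = 1 from by norm_num, Real.rpow_one, neg_mul]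
  have hnormbound : ∀ n : ℕ, (∫ t in Ioi (0:ℝ), ‖F n t‖) ≤ w * (1/(2*π*((n:ℝ)+1)))^2 := by
    intro n
    rw [← hmajorval n]
    refine setIntegral_mono_on ((hFint n).norm) (hmajor n) measurableSet_Ioi (fun t ht => ?_)
    rw [hF]
    simp only [Real.norm_eq_abs, abs_mul, abs_exp]
    have h1 : |Real.sin (w*t)| ≤ w * t := by
      calc |Real.sin (w*t)| ≤ |w*t| := Real.abs_sin_le_abs
        _ = w * t := abs_of_pos (mul_pos hw ht)
    calc |Real.sin (w*t)| * Real.exp (-(2*π*((n:ℝ)+1))*t)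
        ≤ (w*t) * Real.exp (-(2*π*((n:ℝ)+1))*t) :=
          mul_le_mul_of_nonneg_right h1 (Real.exp_pos _).le
      _ = w * (t * Real.exp (-(2*π*((n:ℝ)+1))*t)) := by ring
  have hsummable : Summable fun n : ℕ => ∫ t in Ioi (0:ℝ), ‖F n t‖ := by
    refine Summable.of_nonneg_of_le (fun n => integral_nonneg (fun t => norm_nonneg _))
      hnormbound ?_
    refine (base_summable.mul_left (w/(4*π^2))).congr fun n => ?_
    have hπ := Real.pi_ne_zero
    have hn : ((n:ℝ)+1) ≠ 0 := by positivity
    field_simp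
    norm_num
  have hswap := integral_tsum_of_summable_integral_norm (μ := volume.restrict (Ioi (0:ℝ)))
    hFint hsummable
  have hpt : ∀ t ∈ Ioi (0:ℝ), (∑' n : ℕ, F n t)
      = Real.sin (w * t) / (Real.exp (2 * π * t) - 1) := by
    intro t ht
    have ht0 : (0:ℝ) < t := ht
    set r : ℝ := Real.exp (-(2*π*t)) with hr
    have hr0 : 0 ≤ r := (Real.exp_pos _).le
    have hr1 : r < 1 := by
      rw [hr, Real.exp_lt_one_iff]
      have := Real.pi_pos
      nlinarith
    have hterm : ∀ n : ℕ, F n t = Real.sin (w*t) * r^(n+1) := by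
      intro n
      rw [hF, hr, ← Real.exp_nat_mul]
      push_cast
      ring_nf
    rw [tsum_congr hterm, tsum_mul_left]
    have hgeo : ∑' n : ℕ, r^(n+1) = r * (1-r)⁻¹ := by
      have hpow : ∀ n : ℕ, r^(n+1) = r * r^n := fun n => by ring
      rw [tsum_congr hpow, tsum_mul_left, tsum_geometric_of_lt_one hr0 hr1]
    rw [hgeo]
    have hE : 1 < Real.exp (2*π*t) := by
      rw [show (1:ℝ) = Real.exp 0 from (Real.exp_zero).symm]
      apply Real.exp_lt_exp.mpr
      have := Real.pi_pos
      nlinarith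
    have hE0 : Real.exp (2*π*t) ≠ 0 := (Real.exp_pos _).ne'
    have hE1 : Real.exp (2*π*t) - 1 ≠ 0 := by linarith
    have hrE : r = (Real.exp (2*π*t))⁻¹ := by
      rw [hr, ← Real.exp_neg]
    have hr1' : (1:ℝ) - r ≠ 0 := by
      intro h
      have : r = 1 := by linarith
      rw [this] at hr1; exact absurd hr1 (lt_irrefl _)
    have hfrac : r * (1-r)⁻¹ = (Real.exp (2*π*t) - 1)⁻¹ := by
      rw [hrE, ← mul_inv]
      congr 1
      field_simp
    rw [hfrac, div_eq_mul_inv]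
  calc ∫ t in Ioi (0:ℝ), Real.sin (w * t) / (Real.exp (2 * π * t) - 1)
      = ∫ t in Ioi (0:ℝ), ∑' n : ℕ, F n t :=
        setIntegral_congr_fun measurableSet_Ioi (fun t ht => (hpt t ht).symm)
    _ = ∑' n : ℕ, ∫ t in Ioi (0:ℝ), F n t := hswap.symm
    _ = ∑' n : ℕ, w/((2*π*((n:ℝ)+1))^2+w^2) := by
        refine tsum_congr fun n => ?_
        rw [← integral_exp_mul_sin w (hb n)]
        refine setIntegral_congr_fun measurableSet_Ioi (fun t ht => ?_)
        rw [hF]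
        ring

lemma sum_A {w : ℝ} (hw : 0 < w) :
    ∑' n : ℤ, Real.exp (-(w * |(n:ℝ)|))
      = (1 + Real.exp (-w)) * (1 - Real.exp (-w))⁻¹ := by
  set f : ℤ → ℝ := fun n => Real.exp (-(w * |(n:ℝ)|)) with hfdef
  set r : ℝ := Real.exp (-w) with hrdef
  have hr0 : 0 ≤ r := (Real.exp_pos _).le
  have hr1 : r < 1 := by
    rw [hrdef, Real.exp_lt_one_iff]; linarith
  have ht1 : ∀ n : ℕ, f n = r^n := by
    intro n
    rw [hfdef, hrdef]
    simp only []
    push_cast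
    rw [abs_of_nonneg (Nat.cast_nonneg n), show -(w*(n:ℝ)) = (n:ℝ) * (-w) from by ring,
      Real.exp_nat_mul]
  have ht2 : ∀ n : ℕ, f (-((n:ℤ)+1)) = r^(n+1) := by
    intro n
    rw [hfdef, hrdef]
    simp only []
    push_cast
    rw [abs_neg, abs_of_nonneg (by positivity),
      show -(w*((n:ℝ)+1)) = (((n+1:ℕ)):ℝ) * (-w) from by push_cast; ring, Real.exp_nat_mul]
  have hs1 : Summable fun n : ℕ => f n :=
    (summable_geometric_of_lt_one hr0 hr1).congr (fun n => (ht1 n).symm)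
  have hs2 : Summable fun n : ℕ => f (-((n:ℤ)+1)) :=
    ((summable_geometric_of_lt_one hr0 hr1).mul_left r).congr
      (fun n => by rw [ht2 n]; ring)
  rw [tsum_of_nat_of_neg_add_one hs1 hs2, tsum_congr ht1, tsum_congr ht2,
    tsum_geometric_of_lt_one hr0 hr1]
  have hgeo : ∑' n : ℕ, r^(n+1) = r * (1-r)⁻¹ := by
    rw [tsum_congr (fun n : ℕ => show r^(n+1) = r * r^n from by ring), tsum_mul_left,
      tsum_geometric_of_lt_one hr0 hr1]
  rw [hgeo]
  ring

lemma sum_B {w : ℝ} (hw : 0 < w) :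
    ∑' n : ℤ, 2*w/(w^2+4*π^2*((n:ℝ))^2)
      = 2/w + 2 * ∑' n : ℕ, 2*w/(w^2+4*π^2*((n:ℝ)+1)^2) := by
  set f : ℤ → ℝ := fun n => 2*w/(w^2+4*π^2*((n:ℝ))^2) with hfdef
  have hpart1 : Summable fun n : ℕ => f n := by
    rw [← summable_nat_add_iff 1]
    refine (summable_u hw).congr fun n => ?_
    rw [hfdef]; push_cast; ring_nf
  have hpart2 : Summable fun n : ℕ => f (-((n:ℤ)+1)) := by
    refine (summable_u hw).congr fun n => ?_
    rw [hfdef]; push_cast; ring_nf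
  rw [tsum_of_nat_of_neg_add_one hpart1 hpart2]
  have h1 : ∑' n : ℕ, f n
      = 2/w + ∑' n : ℕ, 2*w/(w^2+4*π^2*((n:ℝ)+1)^2) := by
    rw [hpart1.tsum_eq_zero_add]
    congr 1
    · rw [hfdef]
      push_cast
      rw [show w^2+4*π^2*(0:ℝ)^2 = w^2 from by ring]
      rw [sq]
      field_simp
    · refine tsum_congr fun n => ?_
      rw [hfdef]; push_cast; ring_nf
  have h2 : ∑' n : ℕ, f (-((n:ℤ)+1))
      = ∑' n : ℕ, 2*w/(w^2+4*π^2*((n:ℝ)+1)^2) := by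
    refine tsum_congr fun n => ?_
    rw [hfdef]; push_cast; ring_nf
  rw [h1, h2]
  ring

/-- For every real `w > 0`,
`∫₀^∞ sin(wt)/(e^{2πt}-1) dt = (1/2)(1/(e^w - 1) + 1/2 - 1/w)`. -/
theorem fourier_sine_transform_bose (w : ℝ) (hw : 0 < w) :
    ∫ t in Set.Ioi (0:ℝ), Real.sin (w * t) / (Real.exp (2 * Real.pi * t) - 1) =
      (1/2) * (1 / (Real.exp w - 1) + 1/2 - 1/w) := by
  have key := poisson_step hw
  rw [sum_A hw, sum_B hw] at key
  set S : ℝ := ∑' n : ℕ, 2*w/(w^2+4*π^2*((n:ℝ)+1)^2) with hS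
  have hI : ∫ t in Set.Ioi (0:ℝ), Real.sin (w * t) / (Real.exp (2 * Real.pi * t) - 1)
      = (1/2) * S := by
    rw [integral_eq_sum hw, hS]
    rw [show (∑' n : ℕ, w/((2*π*((n:ℝ)+1))^2+w^2))
        = ∑' n : ℕ, (1/2) * (2*w/(w^2+4*π^2*((n:ℝ)+1)^2)) from
      tsum_congr fun n => by rw [mul_div_assoc]; congr 1 <;> ring, tsum_mul_left]
  rw [hI]
  have hE : 1 < Real.exp w := by
    rw [show (1:ℝ) = Real.exp 0 from (Real.exp_zero).symm]
    exact Real.exp_lt_exp.mpr hw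
  have hE0 : Real.exp w ≠ 0 := (Real.exp_pos _).ne'
  have hE1 : Real.exp w - 1 ≠ 0 := by linarith
  have hw0 : w ≠ 0 := hw.ne'
  have hrE : Real.exp (-w) = (Real.exp w)⁻¹ := Real.exp_neg w
  rw [hrE] at key
  have h1E : (1:ℝ) - (Real.exp w)⁻¹ ≠ 0 := by
    rw [← hrE]
    have hlt : Real.exp (-w) < 1 := by rw [Real.exp_lt_one_iff]; linarith
    exact sub_ne_zero.mpr (by linarith)
  have hSval : S = ((1 + (Real.exp w)⁻¹) * (1 - (Real.exp w)⁻¹)⁻¹ - 2/w)/2 := by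
    linarith [key]
  rw [hSval]
  field_simp
  ring
end

section
/- For all complex s with 0 < Re(s) < 1, ζ(s)Γ(s) = ∫₀^∞ t^{s-1} (1/(e^t - 1) - 1/t) dt. -/
open MeasureTheory Set Real Filter Complex Topology Asymptotics

noncomputable def zgF₁ : ℝ → ℂ := fun t => ((1 / (Real.exp t - 1) : ℝ) : ℂ)
noncomputable def zgF₂ : ℝ → ℂ := Set.indicator (Ioc 0 1) (fun t : ℝ => (t : ℂ) ^ (-1 : ℂ))
noncomputable def zgG : ℝ → ℂ := fun t => zgF₁ t - zgF₂ t
noncomputable def zgf : ℝ → ℂ := fun t : ℝ => ((1 / (Real.exp t - 1) - 1 / t : ℝ) : ℂ)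



lemma exp_sub_one_pos {t : ℝ} (ht : 0 < t) : 0 < Real.exp t - 1 := by
  simpa using Real.exp_lt_exp.mpr ht

lemma exp_sub_one_ge {t : ℝ} : t ≤ Real.exp t - 1 := by
  linarith [Real.add_one_le_exp t]

/-- key bound near zero -/
lemma zgf_bound {t : ℝ} (ht : t ∈ Ioc (0:ℝ) 1) : |1 / (Real.exp t - 1) - 1 / t| ≤ 3/4 := by
  obtain ⟨ht0, ht1⟩ := ht
  have he : 0 < Real.exp t - 1 := exp_sub_one_pos ht0
  have hnum : Real.exp t - 1 - t ≤ 3/4 * t^2 := by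
    have := Real.exp_bound (x := t) (by rw [abs_of_pos ht0]; exact ht1) (n := 2) (by norm_num)
    have h2 : |Real.exp t - (1 + t)| ≤ |t|^2 * (3/4) := by
      convert this using 2
      · simp [Finset.sum_range_succ]
      · norm_num [Nat.factorial]
    rw [abs_of_pos ht0] at h2
    nlinarith [abs_le.mp h2]
  have h1 : 1 / (Real.exp t - 1) - 1 / t = (t - (Real.exp t - 1)) / ((Real.exp t - 1) * t) := by
    field_simp
  rw [h1, abs_div, abs_sub_comm, _root_.abs_of_nonneg (by linarith [exp_sub_one_ge (t := t)]),
    _root_.abs_of_pos (by positivity), div_le_iff₀ (by positivity)]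
  nlinarith [exp_sub_one_ge (t := t)]

/-- exponential decay at infinity -/
lemma zgF₁_le {t : ℝ} (ht : 1 ≤ t) : 1 / (Real.exp t - 1) ≤ 2 * Real.exp (-t) := by
  have h2 : (2:ℝ) ≤ Real.exp t := by
    calc (2:ℝ) ≤ Real.exp 1 := by linarith [Real.add_one_le_exp 1]
    _ ≤ Real.exp t := Real.exp_le_exp.mpr ht
  have he : 0 < Real.exp t - 1 := by linarith
  calc 1 / (Real.exp t - 1) ≤ 2 / Real.exp t := by
        rw [div_le_div_iff₀ he (Real.exp_pos t)]; nlinarith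
  _ = 2 * Real.exp (-t) := by rw [Real.exp_neg]; ring




lemma zgF₁_cont : ContinuousOn zgF₁ (Ioi 0) := by
  apply Continuous.comp_continuousOn Complex.continuous_ofReal
  apply ContinuousOn.div continuousOn_const (by fun_prop)
  exact fun t ht => (exp_sub_one_pos ht).ne'

lemma zgF₁_loc : LocallyIntegrableOn zgF₁ (Ioi 0) := by
  exact zgF₁_cont.locallyIntegrableOn measurableSet_Ioi

lemma zgF₂_loc : LocallyIntegrableOn zgF₂ (Ioi 0) := by
  have h : LocallyIntegrableOn (fun t : ℝ => (t : ℂ) ^ (-1 : ℂ)) (Ioi 0) := by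
    refine ContinuousOn.locallyIntegrableOn ?_ measurableSet_Ioi
    intro t ht
    exact (Complex.continuousAt_ofReal_cpow_const _ _ (Or.inr (by exact_mod_cast (ne_of_gt ht)))).continuousWithinAt
  intro x hx
  obtain ⟨K, hK, hint⟩ := h x hx
  exact ⟨K, hK, hint.indicator measurableSet_Ioc⟩

lemma zgG_loc : LocallyIntegrableOn zgG (Ioi 0) := zgF₁_loc.sub zgF₂_loc

lemma zgG_top : zgG =O[atTop] fun t => Real.exp (-t) := by
  apply IsBigO.of_bound 2
  filter_upwards [eventually_gt_atTop 1] with t ht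
  have h1 : zgG t = zgF₁ t := by
    simp [zgG, zgF₂, Set.indicator_of_notMem (fun h : t ∈ Ioc (0:ℝ) 1 => absurd h.2 (not_le.mpr ht))]
  rw [h1]
  simp only [zgF₁, Complex.norm_real, Real.norm_eq_abs, Real.abs_exp]
  have hp := exp_sub_one_pos (by linarith : (0:ℝ) < t)
  rw [_root_.abs_of_nonneg (div_nonneg zero_le_one hp.le)]
  exact zgF₁_le ht.le

lemma zgG_bot : zgG =O[𝓝[>] (0:ℝ)] fun t => t ^ (-(0:ℝ)) := by
  apply IsBigO.of_bound (3/4)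
  filter_upwards [Ioo_mem_nhdsGT zero_lt_one] with t ht
  have h1 : zgG t = zgf t := by
    have hmem : t ∈ Ioc (0:ℝ) 1 := ⟨ht.1, ht.2.le⟩
    have : (t : ℂ) ^ (-1 : ℂ) = ((1 / t : ℝ) : ℂ) := by
      rw [Complex.cpow_neg_one]
      push_cast
      rw [one_div]
    simp only [zgG, zgF₁, zgF₂, Set.indicator_of_mem hmem, this, zgf]
    push_cast
    ring
  rw [h1]
  simp only [zgf, Complex.norm_real, Real.norm_eq_abs, neg_zero, Real.rpow_zero, norm_one, mul_one]
  exact zgf_bound ⟨ht.1, ht.2.le⟩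

lemma zgG_diff {s : ℂ} (hs : 0 < s.re) : DifferentiableAt ℂ (mellin zgG) s :=
  mellin_differentiableAt_of_isBigO_rpow_exp one_pos zgG_loc
    (by simpa using zgG_top) zgG_bot (by simpa using hs)




/-- geometric series giving `1/(e^t - 1)` -/
lemma zg_hasSum {t : ℝ} (ht : 0 < t) :
    HasSum (fun n : ℕ => (1:ℂ) * (Real.exp (-((n:ℝ)+1) * t) : ℝ)) (zgF₁ t) := by
  have h0 : Real.exp (-t) < 1 := Real.exp_lt_one_iff.mpr (by linarith)
  have h := (hasSum_geometric_of_lt_one (Real.exp_pos (-t)).le h0).mul_left (Real.exp (-t))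
  have heq : ∀ n : ℕ, Real.exp (-t) * Real.exp (-t) ^ n = Real.exp (-((n:ℝ)+1) * t) := by
    intro n
    rw [← Real.exp_nat_mul, ← Real.exp_add]
    ring_nf
  have hval : Real.exp (-t) * (1 - Real.exp (-t))⁻¹ = 1 / (Real.exp t - 1) := by
    have he : Real.exp t - 1 ≠ 0 := (exp_sub_one_pos ht).ne'
    rw [Real.exp_neg, eq_div_iff he]
    field_simp
  rw [funext heq, hval] at h
  exact (Complex.ofRealCLM.hasSum h).congr_fun (fun n => by simp [Complex.ofRealCLM_apply])

lemma zg_summable {s : ℂ} (hs : 1 < s.re) :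
    Summable fun n : ℕ => ‖(1:ℂ)‖ / ((n:ℝ)+1) ^ s.re := by
  simp only [norm_one]
  have := (Real.summable_one_div_nat_rpow (p := s.re)).mpr hs
  have h2 := (summable_nat_add_iff 1).mpr this
  refine h2.congr fun n => ?_
  push_cast
  ring_nf

lemma zgF₁_mellin {s : ℂ} (hs : 1 < s.re) :
    mellin zgF₁ s = Complex.Gamma s * riemannZeta s := by
  have hp : ∀ n : ℕ, (1:ℂ) = 0 ∨ (0:ℝ) < (n:ℝ)+1 := fun n => Or.inr (by positivity)
  have h := hasSum_mellin (F := zgF₁) (s := s) hp (by linarith)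
    (fun t ht => zg_hasSum ht) (zg_summable hs)
  rw [← h.tsum_eq, zeta_eq_tsum_one_div_nat_add_one_cpow hs, ← tsum_mul_left]
  refine tsum_congr fun n => ?_
  rw [mul_one, mul_one_div]
  push_cast
  ring_nf

lemma zgF₁_conv {s : ℂ} (hs : 1 < s.re) : MellinConvergent zgF₁ s := by
  refine mellinConvergent_of_isBigO_rpow_exp one_pos zgF₁_loc ?_ ?_ (show (1:ℝ) < s.re from hs)
  · apply IsBigO.of_bound 2
    filter_upwards [eventually_ge_atTop 1] with t ht
    have hp := exp_sub_one_pos (by linarith : (0:ℝ) < t)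
    simp only [zgF₁, Complex.norm_real, Real.norm_eq_abs, Real.abs_exp,
      _root_.abs_of_nonneg (div_nonneg zero_le_one hp.le)]
    rw [neg_one_mul]
    exact zgF₁_le ht
  · apply IsBigO.of_bound 1
    filter_upwards [self_mem_nhdsWithin] with t (ht : 0 < t)
    have hp := exp_sub_one_pos ht
    have hn : ‖(t : ℝ) ^ (-(1:ℝ))‖ = 1 / t := by
      rw [Real.norm_eq_abs, Real.rpow_neg_one, abs_inv, _root_.abs_of_pos ht, one_div]
    simp only [zgF₁, Complex.norm_real, Real.norm_eq_abs,
      _root_.abs_of_nonneg (div_nonneg zero_le_one hp.le), hn, one_mul]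
    rw [div_le_div_iff₀ hp ht]
    nlinarith [exp_sub_one_ge (t := t)]

lemma zgG_mellin_right {s : ℂ} (hs : 1 < s.re) :
    mellin zgG s = Complex.Gamma s * riemannZeta s - 1 / (s - 1) := by
  have h2 := hasMellin_cpow_Ioc (-1) (s := s) (by simp; linarith)
  have h3 := hasMellin_sub (zgF₁_conv hs) h2.1
  unfold zgG zgF₂
  rw [h3.2, zgF₁_mellin hs, h2.2]
  norm_num [sub_eq_add_neg]




lemma zgf_loc : LocallyIntegrableOn zgf (Ioi 0) := by
  refine ContinuousOn.locallyIntegrableOn ?_ measurableSet_Ioi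
  apply Continuous.comp_continuousOn Complex.continuous_ofReal
  apply ContinuousOn.sub
  · exact ContinuousOn.div continuousOn_const (by fun_prop)
      (fun t ht => (exp_sub_one_pos ht).ne')
  · exact ContinuousOn.div continuousOn_const (by fun_prop) (fun t ht => ne_of_gt ht)

lemma zgf_top : zgf =O[atTop] fun t : ℝ => t ^ (-(1:ℝ)) := by
  apply IsBigO.of_bound 3
  filter_upwards [eventually_ge_atTop 1] with t ht
  have ht0 : (0:ℝ) < t := by linarith
  have hp := exp_sub_one_pos ht0
  have hexp : Real.exp (-t) ≤ 1 / t := by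
    rw [Real.exp_neg, ← one_div, div_le_div_iff₀ (Real.exp_pos t) ht0]
    nlinarith [Real.add_one_le_exp t]
  have h1 : |1 / (Real.exp t - 1) - 1 / t| ≤ 3 * (1 / t) := by
    have hA : 1 / (Real.exp t - 1) ≤ 2 * (1/t) := by
      calc 1 / (Real.exp t - 1) ≤ 2 * Real.exp (-t) := zgF₁_le ht
      _ ≤ 2 * (1/t) := by linarith
    have hB : (0:ℝ) ≤ 1 / (Real.exp t - 1) := by positivity
    have hC : (0:ℝ) < 1 / t := by positivity
    rw [abs_le]
    constructor <;> nlinarith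
  simp only [zgf, Complex.norm_real, Real.norm_eq_abs]
  rw [Real.rpow_neg_one, abs_inv, _root_.abs_of_pos ht0, ← one_div]
  exact h1

lemma zgf_bot : zgf =O[𝓝[>] (0:ℝ)] fun t : ℝ => t ^ (-(0:ℝ)) := by
  apply IsBigO.of_bound (3/4)
  filter_upwards [Ioo_mem_nhdsGT zero_lt_one] with t ht
  simp only [zgf, Complex.norm_real, Real.norm_eq_abs, neg_zero, Real.rpow_zero, norm_one,
    mul_one]
  exact zgf_bound ⟨ht.1, ht.2.le⟩

lemma zgf_conv {s : ℂ} (h1 : 0 < s.re) (h2 : s.re < 1) : MellinConvergent zgf s :=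
  mellinConvergent_of_isBigO_rpow zgf_loc zgf_top h2 zgf_bot h1

lemma mellin_zgG_strip {s : ℂ} (h1 : 0 < s.re) (h2 : s.re < 1) :
    mellin zgG s = (∫ t in Ioi (0:ℝ), (t:ℂ) ^ (s-1) * zgf t) - 1 / (s-1) := by
  have hsub : (s - 2).re < -1 := by simp [Complex.sub_re]; linarith
  have hI2 : Integrable (fun t : ℝ => Set.indicator (Ioi 1) (fun u : ℝ => (u:ℂ) ^ (s-2)) t)
      (volume.restrict (Ioi (0:ℝ))) := by
    rw [integrable_indicator_iff measurableSet_Ioi, IntegrableOn,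
      Measure.restrict_restrict measurableSet_Ioi,
      show Ioi (1:ℝ) ∩ Ioi 0 = Ioi 1 by rw [inter_eq_left]; exact fun x hx => mem_Ioi.mpr (lt_trans zero_lt_one hx)]
    exact integrableOn_Ioi_cpow_of_lt hsub zero_lt_one
  have hI1 : Integrable (fun t : ℝ => (t:ℂ) ^ (s-1) * zgf t) (volume.restrict (Ioi (0:ℝ))) := by
    have := zgf_conv h1 h2
    exact (by simpa [MellinConvergent, smul_eq_mul] using this : IntegrableOn _ _ _)
  have key : ∀ t ∈ Ioi (0:ℝ), (t:ℂ) ^ (s-1) • zgG t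
      = (t:ℂ) ^ (s-1) * zgf t + Set.indicator (Ioi 1) (fun u : ℝ => (u:ℂ) ^ (s-2)) t := by
    intro t ht
    have ht0 : (0:ℝ) < t := ht
    have htne : (t:ℂ) ≠ 0 := by exact_mod_cast ht0.ne'
    rcases le_or_gt t 1 with hle | hgt
    · have hmem : t ∈ Ioc (0:ℝ) 1 := ⟨ht0, hle⟩
      have hnot : t ∉ Ioi (1:ℝ) := by simp [hle]
      rw [Set.indicator_of_notMem hnot, add_zero, smul_eq_mul]
      congr 1
      simp only [zgG, zgF₁, zgF₂, Set.indicator_of_mem hmem, zgf, Complex.cpow_neg_one]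
      push_cast
      ring
    · have hnot : t ∉ Ioc (0:ℝ) 1 := by simp [hgt.le, not_le.mpr hgt]
      rw [Set.indicator_of_mem (mem_Ioi.mpr hgt), smul_eq_mul]
      have hc : (t:ℂ) ^ (s-2) = (t:ℂ) ^ (s-1) * (t:ℂ)⁻¹ := by
        rw [← Complex.cpow_neg_one, ← Complex.cpow_add _ _ htne]
        ring_nf
      rw [hc]
      simp only [zgG, zgF₁, zgF₂, Set.indicator_of_notMem hnot, zgf]
      push_cast
      ring
  rw [mellin, setIntegral_congr_fun measurableSet_Ioi key, integral_add hI1 hI2]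
  congr 1
  rw [integral_indicator measurableSet_Ioi, Measure.restrict_restrict measurableSet_Ioi,
    show Ioi (1:ℝ) ∩ Ioi 0 = Ioi 1 by rw [inter_eq_left]; exact fun x hx => mem_Ioi.mpr (lt_trans zero_lt_one hx),
    integral_Ioi_cpow_of_lt hsub zero_lt_one]
  rw [show s - 2 + 1 = s - 1 by ring]
  push_cast
  rw [one_cpow]
  ring




def zgU : Set ℂ := {s : ℂ | 0 < s.re ∧ (s.im ≠ 0 ∨ s.re < 1)}

lemma zgU_open : IsOpen zgU := by
  have : zgU = (Complex.re ⁻¹' Ioi 0) ∩ ((Complex.im ⁻¹' {0})ᶜ ∪ Complex.re ⁻¹' Iio 1) := by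
    ext z; simp [zgU, and_comm]
  rw [this]
  exact (isOpen_Ioi.preimage Complex.continuous_re).inter
    ((isClosed_singleton.preimage Complex.continuous_im).isOpen_compl.union
      (isOpen_Iio.preimage Complex.continuous_re))

lemma zgU_preconnected : IsPreconnected zgU := by
  have hA : Convex ℝ {s : ℂ | 0 < s.re ∧ 0 < s.im} :=
    (convex_halfSpace_re_gt (r := 0)).inter (convex_halfSpace_im_gt (r := 0))
  have hB : Convex ℝ {s : ℂ | 0 < s.re ∧ s.im < 0} :=
    (convex_halfSpace_re_gt (r := 0)).inter (convex_halfSpace_im_lt (r := 0))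
  have hC : Convex ℝ {s : ℂ | 0 < s.re ∧ s.re < 1} :=
    (convex_halfSpace_re_gt (r := 0)).inter (convex_halfSpace_re_lt (r := 1))
  have hAC : IsPreconnected ({s : ℂ | 0 < s.re ∧ 0 < s.im} ∪ {s : ℂ | 0 < s.re ∧ s.re < 1}) := by
    apply IsPreconnected.union ((1/2 : ℝ) + Complex.I)
    · constructor <;> simp
    · constructor <;> norm_num
    · exact hA.isPreconnected
    · exact hC.isPreconnected
  have hACB : IsPreconnected (({s : ℂ | 0 < s.re ∧ 0 < s.im} ∪ {s : ℂ | 0 < s.re ∧ s.re < 1})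
      ∪ {s : ℂ | 0 < s.re ∧ s.im < 0}) := by
    apply IsPreconnected.union ((1/2 : ℝ) - Complex.I)
    · right; constructor <;> norm_num
    · constructor <;> norm_num
    · exact hAC
    · exact hB.isPreconnected
  have : zgU = ({s : ℂ | 0 < s.re ∧ 0 < s.im} ∪ {s : ℂ | 0 < s.re ∧ s.re < 1})
      ∪ {s : ℂ | 0 < s.re ∧ s.im < 0} := by
    ext z
    constructor
    · rintro ⟨hre, him | hlt⟩
      · rcases (Ne.lt_or_gt him) with h | h
        · exact Or.inr ⟨hre, h⟩
        · exact Or.inl (Or.inl ⟨hre, h⟩)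
      · exact Or.inl (Or.inr ⟨hre, hlt⟩)
    · rintro ((⟨ha1, ha2⟩ | ⟨hc1, hc2⟩) | ⟨hb1, hb2⟩)
      · exact ⟨ha1, Or.inl ha2.ne'⟩
      · exact ⟨hc1, Or.inr hc2⟩
      · exact ⟨hb1, Or.inl hb2.ne⟩
  rw [this]
  exact hACB

lemma zgU_ne_one {s : ℂ} (hs : s ∈ zgU) : s ≠ 1 := by
  rintro rfl
  simp [zgU] at hs

lemma zg_key {s : ℂ} (hs : s ∈ zgU) :
    mellin zgG s + 1 / (s - 1) = riemannZeta s * Complex.Gamma s := by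
  have hAnalH : AnalyticOnNhd ℂ (fun z => mellin zgG z + 1 / (z - 1)) zgU := by
    refine DifferentiableOn.analyticOnNhd (fun z hz => DifferentiableAt.differentiableWithinAt ?_)
      zgU_open
    exact (zgG_diff hz.1).add ((differentiableAt_const 1).div
      ((differentiableAt_id.sub (differentiableAt_const 1))) (sub_ne_zero.mpr (zgU_ne_one hz)))
  have hAnalZ : AnalyticOnNhd ℂ (fun z => riemannZeta z * Complex.Gamma z) zgU := by
    refine DifferentiableOn.analyticOnNhd (fun z hz => DifferentiableAt.differentiableWithinAt ?_)
      zgU_open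
    refine (differentiableAt_riemannZeta (zgU_ne_one hz)).mul (Complex.differentiableAt_Gamma _ ?_)
    intro m hsm
    have h0 : (0:ℝ) < z.re := hz.1
    rw [hsm] at h0
    simp at h0
    exact (Nat.cast_nonneg (α := ℝ) m).not_gt h0
  have hmem : (2 + Complex.I : ℂ) ∈ zgU := by
    constructor <;> norm_num
  have hev : (fun z => mellin zgG z + 1 / (z - 1)) =ᶠ[𝓝 (2 + Complex.I : ℂ)]
      (fun z => riemannZeta z * Complex.Gamma z) := by
    have hopen : IsOpen {z : ℂ | 1 < z.re} := isOpen_lt continuous_const Complex.continuous_re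
    refine eventually_of_mem (hopen.mem_nhds (by norm_num)) (fun z hz => ?_)
    show mellin zgG z + 1 / (z - 1) = riemannZeta z * Complex.Gamma z
    rw [zgG_mellin_right hz]
    ring
  exact AnalyticOnNhd.eqOn_of_preconnected_of_eventuallyEq hAnalH hAnalZ zgU_preconnected
    hmem hev hs

/-- For `0 < Re s < 1`, `ζ(s)Γ(s) = ∫₀^∞ t^{s-1}(1/(e^t-1) - 1/t) dt`. -/
theorem zeta_Gamma_integral (s : ℂ) (h1 : 0 < s.re) (h2 : s.re < 1) :
    riemannZeta s * Complex.Gamma s =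
      ∫ t in Set.Ioi (0:ℝ),
        (t:ℂ) ^ (s - 1) * (1 / (Real.exp t - 1) - 1/t : ℝ) := by
  have hU : s ∈ zgU := ⟨h1, Or.inr h2⟩
  rw [← zg_key hU, mellin_zgG_strip h1 h2]
  simp only [zgf]
  ring
end

section
/- Let a ∈ ℝ with a > 0 and a ≠ 2π, and let f : (0,∞) → ℝ be a continuous absolutely integrable function whose Fourier sine transform g(x) = ∫₀^∞ sin(xt) f(t) dt is also absolutely integrable and satisfies the inversion formula f(x) = (2/π) ∫₀^∞ sin(xt) g(t) dt. Define Δ(x) = -π f(x/a)/(π² - aπ/2) - (a/(π² - aπ/2)) ∫₀^∞ sin(xt) f(t) dt. Then for all x > 0, π Δ(ax) = -f(x) + ∫₀^∞ sin(xt) Δ(t) dt. -/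
open MeasureTheory Set

/-- For `a > 0`, `a ≠ 2π`, and `f` continuous, absolutely integrable on `(0,∞)`,
whose sine transform `g` is integrable and satisfies sine inversion, the function
`Δ(x) = -π f(x/a)/(π² - aπ/2) - (a/(π² - aπ/2)) ∫₀^∞ sin(xt) f(t) dt`
solves `π Δ(ax) = -f(x) + ∫₀^∞ sin(xt) Δ(t) dt`. -/
theorem fox_modified_solution (a : ℝ) (ha : 0 < a) (ha2 : a ≠ 2 * Real.pi)
    (f : ℝ → ℝ) (hf_cont : ContinuousOn f (Set.Ioi 0))
    (hf_int : MeasureTheory.IntegrableOn f (Set.Ioi 0))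
    (hg_int : MeasureTheory.IntegrableOn
      (fun x => ∫ t in Set.Ioi (0:ℝ), Real.sin (x * t) * f t) (Set.Ioi 0))
    (hinv : ∀ x > 0, f x = (2/Real.pi) *
      ∫ t in Set.Ioi (0:ℝ), Real.sin (x * t) *
        (∫ u in Set.Ioi (0:ℝ), Real.sin (t * u) * f u))
    (Δ : ℝ → ℝ)
    (hΔ : ∀ x, Δ x = -Real.pi * f (x/a) / (Real.pi^2 - a * Real.pi/2)
        - (a / (Real.pi^2 - a * Real.pi/2)) *
            ∫ t in Set.Ioi (0:ℝ), Real.sin (x * t) * f t) :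
    ∀ x > 0, Real.pi * Δ (a * x) =
      -f x + ∫ t in Set.Ioi (0:ℝ), Real.sin (x * t) * Δ t := by
  intro x hx
  have hπ : (0:ℝ) < Real.pi := Real.pi_pos
  have ha' : a ≠ 0 := ne_of_gt ha
  set g : ℝ → ℝ := fun y => ∫ t in Set.Ioi (0:ℝ), Real.sin (y * t) * f t with hgdef
  have hc : Real.pi^2 - a * Real.pi/2 ≠ 0 := by
    have h2 : Real.pi^2 - a * Real.pi/2 = Real.pi * (Real.pi - a/2) := by ring
    rw [h2]
    refine mul_ne_zero Real.pi_ne_zero fun h => ha2 ?_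
    have := sub_eq_zero.mp h
    linarith
  -- the scaled function
  set F : ℝ → ℝ := fun u => Real.sin (a * x * u) * f u with hFdef
  have hF_int : IntegrableOn F (Set.Ioi 0) := by
    refine hf_int.bdd_mul (c := 1) ?_ (ae_of_all _ fun u => by simpa using Real.abs_sin_le_one _)
    exact (Real.continuous_sin.comp (continuous_const.mul continuous_id)).aestronglyMeasurable
  have hFeq : ∀ t : ℝ, F (t * a⁻¹) = Real.sin (x * t) * f (t / a) := by
    intro t
    simp only [hFdef, div_eq_mul_inv]
    congr 2
    field_simp
  -- integrability of t ↦ sin(xt) f(t/a)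
  have h1 : IntegrableOn (fun t => Real.sin (x * t) * f (t / a)) (Set.Ioi 0) := by
    have := (integrableOn_Ioi_comp_mul_right_iff F 0 (inv_pos.mpr ha)).mpr
      (by simpa using hF_int)
    simpa only [hFeq] using this
  -- integrability of t ↦ sin(xt) g(t)
  have h2 : IntegrableOn (fun t => Real.sin (x * t) * g t) (Set.Ioi 0) := by
    refine hg_int.bdd_mul (c := 1) ?_ (ae_of_all _ fun u => by simpa using Real.abs_sin_le_one _)
    exact (Real.continuous_sin.comp (continuous_const.mul continuous_id)).aestronglyMeasurable
  -- substitution identity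
  have hsub : (∫ t in Set.Ioi (0:ℝ), Real.sin (x * t) * f (t / a)) = a * g (a * x) := by
    have := MeasureTheory.integral_comp_mul_right_Ioi F 0 (inv_pos.mpr ha)
    simp only [hFeq, zero_mul, inv_inv, smul_eq_mul] at this
    rw [this, hgdef]
  -- inversion identity
  have hinv' : (∫ t in Set.Ioi (0:ℝ), Real.sin (x * t) * g t) = Real.pi / 2 * f x := by
    have h := hinv x hx
    have : g = fun t => ∫ u in Set.Ioi (0:ℝ), Real.sin (t * u) * f u := rfl
    rw [h]
    field_simp
    ring
  -- split the integral
  have hpt : ∀ t : ℝ, Real.sin (x * t) * Δ t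
      = (-Real.pi / (Real.pi^2 - a * Real.pi/2)) * (Real.sin (x * t) * f (t / a))
        - (a / (Real.pi^2 - a * Real.pi/2)) * (Real.sin (x * t) * g t) := by
    intro t
    rw [hΔ t, show (∫ u in Set.Ioi (0:ℝ), Real.sin (t * u) * f u) = g t from rfl]
    ring
  have hsplit : (∫ t in Set.Ioi (0:ℝ), Real.sin (x * t) * Δ t)
      = (-Real.pi / (Real.pi^2 - a * Real.pi/2)) * (a * g (a * x)) - (a / (Real.pi^2 - a * Real.pi/2)) * (Real.pi / 2 * f x) := by
    rw [show (fun t => Real.sin (x * t) * Δ t)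
        = fun t => (-Real.pi / (Real.pi^2 - a * Real.pi/2)) * (Real.sin (x * t) * f (t / a))
            - (a / (Real.pi^2 - a * Real.pi/2)) * (Real.sin (x * t) * g t) from funext hpt]
    rw [integral_sub (h1.const_mul _) (h2.const_mul _), integral_const_mul,
      integral_const_mul, hsub, hinv']
  rw [hsplit, hΔ (a * x),
    show (∫ t in Set.Ioi (0:ℝ), Real.sin (a * x * t) * f t) = g (a * x) from rfl,
    mul_div_cancel_left₀ x ha']
  have hd : (Real.pi^2 - a * Real.pi/2) * (Real.pi^2 - a * Real.pi/2)⁻¹ = 1 :=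
    mul_inv_cancel₀ hc
  simp only [div_eq_mul_inv]
  linear_combination (-(f x)) * hd
end
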